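/- Let G be a maximal outerplane graph on Fin n with red vertex set R of even cardinality. If G contains two non-parallel red-blue diagonals, then G is augmentable to meet R. -/

import Mathlib

/-- `x` lies strictly inside the open clockwise arc from `a` to `b` on the convex
`n`-gon whose vertices are `Fin n` in clockwise cyclic order. -/
def InArc (n : ℕ) (a b x : Fin n) : Prop :=
  0 < (x - a).val ∧ (x - a).val < (b - a).val

/-- Two chords of the convex `n`-gon cross: their four endpoints are distinct and
interleave in the cyclic order, i.e. one endpoint of the second chord lies strictly
inside each of the two open arcs determined by the first chord. -/
def Cross (n : ℕ) (e f : Sym2 (Fin n)) : Prop :=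
  ∃ a b c d : Fin n, e = s(a, b) ∧ f = s(c, d) ∧ InArc n a b c ∧ InArc n b a d

/-- A boundary edge of the convex `n`-gon: a chord of the form `{i, i+1 (mod n)}`. -/
def IsBoundaryEdge (n : ℕ) (e : Sym2 (Fin n)) : Prop :=
  ∃ i j : Fin n, e = s(i, j) ∧ (j - i).val = 1

/-- A diagonal of the convex `n`-gon: a chord (pair of distinct vertices) that is not
a boundary edge. -/
def IsDiagonal (n : ℕ) (e : Sym2 (Fin n)) : Prop :=
  ¬ e.IsDiag ∧ ¬ IsBoundaryEdge n e

/-- A maximal outerplane graph (MOP) on `Fin n` (`n ≥ 3`): a simple graph whose edge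
set consists of all `n` boundary edges together with `n - 3` pairwise non-crossing
diagonals. -/
def IsMOP (n : ℕ) (G : SimpleGraph (Fin n)) : Prop :=
  3 ≤ n ∧
  (∀ e, IsBoundaryEdge n e → e ∈ G.edgeSet) ∧
  (∀ e ∈ G.edgeSet, IsBoundaryEdge n e ∨ IsDiagonal n e) ∧
  (∀ e ∈ G.edgeSet, ∀ f ∈ G.edgeSet, ¬ Cross n e f) ∧
  {e ∈ G.edgeSet | IsDiagonal n e}.ncard = n - 3

/-- `G` is (topologically) augmentable to meet the parity constraints with red set `R`:
there is a simple graph `H` on `Fin n`, edge-disjoint from `G`, whose edges are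
pairwise non-crossing chords, in which every red vertex has odd degree and every blue
vertex has even degree. -/
def Augmentable (n : ℕ) (G : SimpleGraph (Fin n)) (R : Set (Fin n)) : Prop :=
  ∃ H : SimpleGraph (Fin n),
    (∀ e ∈ H.edgeSet, e ∉ G.edgeSet) ∧
    (∀ e ∈ H.edgeSet, ∀ f ∈ H.edgeSet, ¬ Cross n e f) ∧
    (∀ v : Fin n, v ∈ R ↔ Odd ((H.neighborSet v).ncard))

/-- Condition (ii): `G` has two non-parallel red-blue diagonals, i.e. two diagonals,
each with exactly one red endpoint, whose four endpoints are distinct and whose colors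
alternate red, blue, red, blue in clockwise cyclic order. -/
def HasNonParallelRedBlueDiagonals (n : ℕ) (G : SimpleGraph (Fin n))
    (R : Set (Fin n)) : Prop :=
  ∃ r₁ b₁ r₂ b₂ : Fin n,
    s(r₁, b₁) ∈ G.edgeSet ∧ IsDiagonal n s(r₁, b₁) ∧
    s(r₂, b₂) ∈ G.edgeSet ∧ IsDiagonal n s(r₂, b₂) ∧
    r₁ ∈ R ∧ r₂ ∈ R ∧ b₁ ∉ R ∧ b₂ ∉ R ∧
    ((0 < (b₁ - r₁).val ∧ (b₁ - r₁).val < (r₂ - r₁).val ∧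
        (r₂ - r₁).val < (b₂ - r₁).val) ∨
     (0 < (b₂ - r₁).val ∧ (b₂ - r₁).val < (r₂ - r₁).val ∧
        (r₂ - r₁).val < (b₁ - r₁).val))

namespace Stmt10

def Cyc (A X B : ℕ) : Prop := (A < X ∧ X < B) ∨ (B < A ∧ (A < X ∨ X < B))

variable {n : ℕ}
open scoped Fin.NatCast Fin.CommRing

lemma fin_sub_val [NeZero n] (x y : Fin n) : (y - x).val = (y.val + (n - x.val)) % n := by
  rw [Fin.sub_def]
  simp [Nat.add_comm]

lemma modsub {A B : ℕ} (hA : A < n) (hB : B < n) :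
    (A + (n - B)) % n = if B ≤ A then A - B else A + (n - B) := by
  split
  · next h =>
    have h1 : A + (n - B) = (A - B) + n := by omega
    rw [h1, Nat.add_mod_right, Nat.mod_eq_of_lt (by omega)]
  · next h => exact Nat.mod_eq_of_lt (by omega)

lemma sub_rebase [NeZero n] (c x y : Fin n) : y - x = (y - c) - (x - c) := by
  rw [sub_sub_sub_cancel_right]

lemma inArc_iff [NeZero n] (c a b x : Fin n) :
    InArc n a b x ↔ Cyc ((a - c).val) ((x - c).val) ((b - c).val) := by
  have hA : (a - c).val < n := (a - c).is_lt
  have hB : (b - c).val < n := (b - c).is_lt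
  have hX : (x - c).val < n := (x - c).is_lt
  have e1 : (x - a).val = ((x - c).val + (n - (a - c).val)) % n := by
    rw [sub_rebase c a x, fin_sub_val]
  have e2 : (b - a).val = ((b - c).val + (n - (a - c).val)) % n := by
    rw [sub_rebase c a b, fin_sub_val]
  rw [InArc, e1, e2, modsub hX hA, modsub hB hA, Cyc]
  split <;> split <;> omega

lemma cross_intro [NeZero n] (c a b x y : Fin n)
    (h1 : Cyc ((a - c).val) ((x - c).val) ((b - c).val))
    (h2 : Cyc ((b - c).val) ((y - c).val) ((a - c).val)) : Cross n s(a, b) s(x, y) :=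
  ⟨a, b, x, y, rfl, rfl, (inArc_iff c a b x).2 h1, (inArc_iff c b a y).2 h2⟩

lemma cross_elim [NeZero n] (c u v w z : Fin n) (h : Cross n s(u, v) s(w, z)) :
    (Cyc ((u-c).val) ((w-c).val) ((v-c).val) ∧ Cyc ((v-c).val) ((z-c).val) ((u-c).val)) ∨
    (Cyc ((u-c).val) ((z-c).val) ((v-c).val) ∧ Cyc ((v-c).val) ((w-c).val) ((u-c).val)) ∨
    (Cyc ((v-c).val) ((w-c).val) ((u-c).val) ∧ Cyc ((u-c).val) ((z-c).val) ((v-c).val)) ∨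
    (Cyc ((v-c).val) ((z-c).val) ((u-c).val) ∧ Cyc ((u-c).val) ((w-c).val) ((v-c).val)) := by
  obtain ⟨a, b, x, y, he, hf, h1, h2⟩ := h
  rw [Sym2.eq_iff] at he hf
  rw [inArc_iff c] at h1 h2
  rcases he with ⟨rfl, rfl⟩ | ⟨rfl, rfl⟩ <;> rcases hf with ⟨rfl, rfl⟩ | ⟨rfl, rfl⟩ <;> tauto

set_option maxHeartbeats 1600000 in
lemma cross_symm [NeZero n] {e f : Sym2 (Fin n)} (h : Cross n e f) : Cross n f e := by
  obtain ⟨a, b, c, d, he, hf, h1, h2⟩ := h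
  subst he hf
  rw [inArc_iff a] at h1 h2
  have h0 : (a - a).val = 0 := by simp
  have l1 : (b - a).val < n := (b - a).is_lt
  have l2 : (c - a).val < n := (c - a).is_lt
  have l3 : (d - a).val < n := (d - a).is_lt
  have : Cross n s(c, d) s(b, a) := by
    refine cross_intro a c d b a ?_ ?_ <;> simp only [Cyc, h0] at * <;> omega
  rwa [Sym2.eq_swap (a := b) (b := a)] at this

lemma core [NeZero n] (G : SimpleGraph (Fin n)) (R : Set (Fin n)) (r1 b1 r2 b2 : Fin n)
    (hnc : ∀ e ∈ G.edgeSet, ∀ f ∈ G.edgeSet, ¬ Cross n e f)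
    (hd1 : s(r1, b1) ∈ G.edgeSet) (hd2 : s(r2, b2) ∈ G.edgeSet)
    (hr1 : r1 ∈ R) (hr2 : r2 ∈ R) (hb1 : b1 ∉ R) (hb2 : b2 ∉ R)
    (hR : Even R.ncard)
    (h1 : 2 ≤ (b1 - r1).val) (h2 : (b1 - r1).val < (r2 - r1).val)
    (h3 : (r2 - r1).val + 2 ≤ (b2 - r1).val) :
    Augmentable n G R := by
  classical
  set o : Fin n → ℕ := fun v => (v - r1).val with ho
  have osimp : ∀ x : Fin n, (x - r1).val = o x := fun _ => rfl
  have oinj : ∀ x y : Fin n, o x = o y → x = y := by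
    intro x y h
    have : x - r1 = y - r1 := Fin.val_injective h
    simpa using congrArg (· + r1) this
  have f5 : o r1 = 0 := by simp [ho]
  have f1 : 2 ≤ o b1 := h1
  have f2 : o b1 < o r2 := h2
  have f3 : o r2 + 2 ≤ o b2 := h3
  have f4 : o b2 < n := (b2 - r1).is_lt
  have hlt : ∀ x : Fin n, o x < n := fun x => (x - r1).is_lt
  -- hub alpha
  have honat : ∀ k : ℕ, k < n → o (r1 + (k : Fin n)) = k := by
    intro k hk
    have : r1 + (k : Fin n) - r1 = (k : Fin n) := by ring_nf
    simp [ho, this, Fin.val_natCast, Nat.mod_eq_of_lt hk]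
  set S1 : Finset ℕ :=
    insert 1 ((Finset.univ.filter (fun v => v ∈ R ∧ 0 < o v ∧ o v < o b1)).image o) with hS1
  have hS1ne : S1.Nonempty := ⟨1, Finset.mem_insert_self _ _⟩
  set A : ℕ := S1.max' hS1ne with hA
  have hA_lb : 1 ≤ A := Finset.le_max' _ 1 (Finset.mem_insert_self _ _)
  have hA_ub : A < o b1 := by
    have := S1.max'_mem hS1ne
    rw [← hA] at this
    rcases Finset.mem_insert.1 this with h | h
    · omega
    · obtain ⟨v, hv, hov⟩ := Finset.mem_image.1 h
      have := (Finset.mem_filter.1 hv).2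
      omega
  have hA_max : ∀ v, v ∈ R → 0 < o v → o v < o b1 → o v ≤ A := by
    intro v hv h0 hb
    exact Finset.le_max' _ _ (Finset.mem_insert_of_mem
      (Finset.mem_image_of_mem o (Finset.mem_filter.2 ⟨Finset.mem_univ _, hv, h0, hb⟩)))
  set α : Fin n := r1 + (A : Fin n) with hαdef
  have f6 : o α = A := honat A (by omega)
  -- hub beta
  set S3 : Finset ℕ :=
    insert (o r2 + 1) ((Finset.univ.filter (fun v => v ∈ R ∧ o r2 < o v ∧ o v < o b2)).image o) with hS3
  have hS3ne : S3.Nonempty := ⟨o r2 + 1, Finset.mem_insert_self _ _⟩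
  set B : ℕ := S3.max' hS3ne with hB
  have hB_lb : o r2 + 1 ≤ B := Finset.le_max' _ _ (Finset.mem_insert_self _ _)
  have hB_ub : B < o b2 := by
    have := S3.max'_mem hS3ne
    rw [← hB] at this
    rcases Finset.mem_insert.1 this with h | h
    · omega
    · obtain ⟨v, hv, hov⟩ := Finset.mem_image.1 h
      have := (Finset.mem_filter.1 hv).2
      omega
  have hB_max : ∀ v, v ∈ R → o r2 < o v → o v < o b2 → o v ≤ B := by
    intro v hv h0 hb
    exact Finset.le_max' _ _ (Finset.mem_insert_of_mem
      (Finset.mem_image_of_mem o (Finset.mem_filter.2 ⟨Finset.mem_univ _, hv, h0, hb⟩)))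
  set β : Fin n := r1 + (B : Fin n) with hβdef
  have f7 : o β = B := honat B (by omega)
  have hαβ : α ≠ β := fun h => by
    have := congrArg o h; omega
  -- red region sets
  set SR1 : Set (Fin n) := {v | v ∈ R ∧ 0 < o v ∧ o v < o b1} with hSR1
  set SR2 : Set (Fin n) := {v | v ∈ R ∧ o b1 < o v ∧ o v < o r2} with hSR2
  set SR3 : Set (Fin n) := {v | v ∈ R ∧ o r2 < o v ∧ o v < o b2} with hSR3
  set SR4 : Set (Fin n) := {v | v ∈ R ∧ o b2 < o v} with hSR4
  set p' : ℕ := (SR1 \ {α}).ncard with hp'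
  set s' : ℕ := (SR3 \ {β}).ncard with hs'
  set q : ℕ := SR2.ncard with hq
  set t : ℕ := SR4.ncard with ht
  set ιβ : ℕ := if β ∈ R then 1 else 0 with hιβ
  set ε : ℕ := (t + 1 + p' + ιβ) % 2 with hε
  set TA : Set (Fin n) :=
    {v | (v ∈ R ∧ o b1 < o v ∧ o v < o b2 ∧ v ≠ β) ∨ o v = o r2 ∨ (ε = 1 ∧ v = β)} with hTA
  set TB : Set (Fin n) :=
    {v | (v ∈ R ∧ (o v < o b1 ∨ o b2 < o v) ∧ v ≠ α) ∨ o v = 0} with hTBdef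
  set H : SimpleGraph (Fin n) :=
    SimpleGraph.fromRel (fun u v => (u = α ∧ v ∈ TA) ∨ (u = β ∧ v ∈ TB)) with hH
  -- membership bounds
  have hTAlb : ∀ τ ∈ TA, o b1 < o τ := by
    intro τ hτ
    rcases hτ with ⟨_, h, _⟩ | h | ⟨_, rfl⟩ <;> omega
  have hTAub : ∀ τ ∈ TA, o τ ≤ B := by
    intro τ hτ
    rcases hτ with ⟨hvR, hlo, hhi, hne⟩ | h | ⟨_, rfl⟩
    · rcases Nat.lt_or_ge (o r2) (o τ) with h' | h'
      · exact hB_max τ hvR h' hhi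
      · omega
    · omega
    · omega
  have hTBb : ∀ σ ∈ TB, o σ < A ∨ o b2 < o σ := by
    intro σ hσ
    rcases hσ with ⟨hvR, hlo, hne⟩ | h
    · rcases hlo with h' | h'
      · rcases Nat.eq_zero_or_pos (o σ) with h0 | h0
        · omega
        · have := hA_max σ hvR h0 h'
          have : o σ ≠ A := fun hh => hne (oinj _ _ (by omega))
          have := hA_max σ hvR h0 h'
          left; omega
      · right; omega
    · omega
  have hαTA : α ∉ TA := fun h => by have := hTAlb α h; omega
  have hαTB : α ∉ TB := fun h => by have := hTBb α h; omega
  have hβTB : β ∉ TB := fun h => by have := hTBb β h; omega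
  have hβTA : β ∈ TA ↔ ε = 1 := by
    constructor
    · intro h
      rcases h with ⟨_, _, _, hne⟩ | h | ⟨h, _⟩
      · exact absurd rfl hne
      · omega
      · exact h
    · intro h; exact Or.inr (Or.inr ⟨h, rfl⟩)
  have hAdj : ∀ u v : Fin n, H.Adj u v ↔ u ≠ v ∧
      ((u = α ∧ v ∈ TA) ∨ (u = β ∧ v ∈ TB) ∨ (v = α ∧ u ∈ TA) ∨ (v = β ∧ u ∈ TB)) := by
    intro u v
    rw [hH, SimpleGraph.fromRel_adj]
    constructor
    · rintro ⟨hne, (⟨h1, h2⟩ | ⟨h1, h2⟩) | (⟨h1, h2⟩ | ⟨h1, h2⟩)⟩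
      · exact ⟨hne, Or.inl ⟨h1, h2⟩⟩
      · exact ⟨hne, Or.inr (Or.inl ⟨h1, h2⟩)⟩
      · exact ⟨hne, Or.inr (Or.inr (Or.inl ⟨h1, h2⟩))⟩
      · exact ⟨hne, Or.inr (Or.inr (Or.inr ⟨h1, h2⟩))⟩
    · rintro ⟨hne, ⟨h1, h2⟩ | ⟨h1, h2⟩ | ⟨h1, h2⟩ | ⟨h1, h2⟩⟩
      · exact ⟨hne, Or.inl (Or.inl ⟨h1, h2⟩)⟩
      · exact ⟨hne, Or.inl (Or.inr ⟨h1, h2⟩)⟩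
      · exact ⟨hne, Or.inr (Or.inl ⟨h1, h2⟩)⟩
      · exact ⟨hne, Or.inr (Or.inr ⟨h1, h2⟩)⟩
  have hshape : ∀ e ∈ H.edgeSet, (∃ τ ∈ TA, e = s(α, τ)) ∨ (∃ σ ∈ TB, e = s(β, σ)) := by
    intro e
    induction e using Sym2.ind with
    | _ u v =>
      intro he
      rw [SimpleGraph.mem_edgeSet, hAdj] at he
      obtain ⟨hne, hc⟩ := he
      rcases hc with ⟨rfl, h⟩ | ⟨rfl, h⟩ | ⟨rfl, h⟩ | ⟨rfl, h⟩
      · exact Or.inl ⟨v, h, rfl⟩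
      · exact Or.inr ⟨v, h, rfl⟩
      · exact Or.inl ⟨u, h, Sym2.eq_swap⟩
      · exact Or.inr ⟨u, h, Sym2.eq_swap⟩
  -- goal 1 : edges of H avoid G
  have g1 : ∀ e ∈ H.edgeSet, e ∉ G.edgeSet := by
    intro e he heG
    rcases hshape e he with ⟨τ, hτ, rfl⟩ | ⟨σ, hσ, rfl⟩
    · have hlbτ := hTAlb τ hτ
      have hubτ := hTAub τ hτ
      refine hnc _ heG _ hd1 ?_
      have hcr : Cross n s(α, τ) s(b1, r1) := by
        refine cross_intro r1 α τ b1 r1 ?_ ?_ <;>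
          simp only [osimp, Cyc, f5, f6] <;> omega
      rwa [Sym2.eq_swap (a := b1)] at hcr
    · have hbσ := hTBb σ hσ
      refine hnc _ heG _ hd2 ?_
      have hcr : Cross n s(β, σ) s(b2, r2) := by
        refine cross_intro r1 β σ b2 r2 ?_ ?_ <;>
          simp only [osimp, Cyc, f5, f7] <;>
          rcases hbσ with h | h <;> omega
      rwa [Sym2.eq_swap (a := b2)] at hcr
  -- goal 2 : edges of H pairwise non-crossing
  have g2 : ∀ e ∈ H.edgeSet, ∀ f ∈ H.edgeSet, ¬ Cross n e f := by
    intro e he f hf hC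
    have hforbid : ∀ x y : Fin n, x ∈ TA → y ∈ TB → ¬ Cross n s(α, x) s(β, y) := by
      intro x y hx hy hCxy
      have hlbx := hTAlb x hx
      have hubx := hTAub x hx
      have hby := hTBb y hy
      by_cases hxβ : x = β
      · subst hxβ
        have quad := cross_elim r1 α β β y hCxy
        simp only [osimp, Cyc, f6, f7] at quad
        rcases quad with ⟨c1, c2⟩ | ⟨c1, c2⟩ | ⟨c1, c2⟩ | ⟨c1, c2⟩ <;> omega
      · have hxB : o x ≠ B := fun hh => hxβ (oinj _ _ (by omega))
        have quad := cross_elim r1 α x β y hCxy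
        simp only [osimp, Cyc, f6, f7] at quad
        rcases hby with h | h <;>
          rcases quad with ⟨c1, c2⟩ | ⟨c1, c2⟩ | ⟨c1, c2⟩ | ⟨c1, c2⟩ <;> omega
    rcases hshape e he with ⟨τ, hτ, rfl⟩ | ⟨σ, hσ, rfl⟩ <;>
      rcases hshape f hf with ⟨τ', hτ', rfl⟩ | ⟨σ', hσ', rfl⟩
    · have l1 := hTAlb τ hτ
      have l2 := hTAub τ hτ
      have l3 := hTAlb τ' hτ'
      have l4 := hTAub τ' hτ'
      have quad := cross_elim r1 α τ α τ' hC
      simp only [osimp, Cyc, f6, f7] at quad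
      rcases quad with ⟨c1, c2⟩ | ⟨c1, c2⟩ | ⟨c1, c2⟩ | ⟨c1, c2⟩ <;> omega
    · exact hforbid τ σ' hτ hσ' hC
    · -- e = s(β,σ), f = s(α,τ') : use symmetry of the situation
      exact hforbid τ' σ hτ' hσ (cross_symm hC)
    · have b1σ := hTBb σ hσ
      have b2σ := hTBb σ' hσ'
      have quad := cross_elim r1 β σ β σ' hC
      simp only [osimp, Cyc, f6, f7] at quad
      rcases b1σ with h | h <;> rcases b2σ with h' | h' <;>
        rcases quad with ⟨c1, c2⟩ | ⟨c1, c2⟩ | ⟨c1, c2⟩ | ⟨c1, c2⟩ <;> omega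
  -- counting
  set Eset : Set (Fin n) := {v | ε = 1 ∧ v = β} with hEset
  set Fset : Set (Fin n) := {v | ε = 1 ∧ v = α} with hFset
  have hε01 : ε = 0 ∨ ε = 1 := by omega
  have hEcard : Eset.ncard = ε := by
    rcases hε01 with h | h
    · have : Eset = ∅ := by
        ext u; simp only [hEset, Set.mem_setOf_eq, Set.mem_empty_iff_false, iff_false]
        rintro ⟨h1, _⟩; omega
      rw [this, Set.ncard_empty, h]
    · have : Eset = {β} := by
        ext u; simp only [hEset, Set.mem_setOf_eq, Set.mem_singleton_iff]
        constructor
        · rintro ⟨_, h2⟩; exact h2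
        · intro h2; exact ⟨h, h2⟩
      rw [this, Set.ncard_singleton, h]
  have hFcard : Fset.ncard = ε := by
    rcases hε01 with h | h
    · have : Fset = ∅ := by
        ext u; simp only [hFset, Set.mem_setOf_eq, Set.mem_empty_iff_false, iff_false]
        rintro ⟨h1, _⟩; omega
      rw [this, Set.ncard_empty, h]
    · have : Fset = {α} := by
        ext u; simp only [hFset, Set.mem_setOf_eq, Set.mem_singleton_iff]
        constructor
        · rintro ⟨_, h2⟩; exact h2
        · intro h2; exact ⟨h, h2⟩
      rw [this, Set.ncard_singleton, h]
  have hTAsplit : TA.ncard = q + (s' + (1 + ε)) := by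
    have he1 : TA = SR2 ∪ ((SR3 \ {β}) ∪ ({r2} ∪ Eset)) := by
      ext u
      constructor
      · intro hu
        rcases hu with ⟨huR, hlo, hhi, hne⟩ | hu2 | ⟨he1, he2⟩
        · rcases Nat.lt_trichotomy (o u) (o r2) with hc | hc | hc
          · exact Or.inl ⟨huR, hlo, hc⟩
          · exact Or.inr (Or.inr (Or.inl (oinj _ _ (by omega))))
          · exact Or.inr (Or.inl ⟨⟨huR, hc, hhi⟩, hne⟩)
        · exact Or.inr (Or.inr (Or.inl (oinj _ _ (by omega))))
        · exact Or.inr (Or.inr (Or.inr ⟨he1, he2⟩))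
      · intro hu
        rcases hu with ⟨huR, hlo, hhi⟩ | ⟨⟨huR, hlo, hhi⟩, hne⟩ | hu2 | ⟨he1, he2⟩
        · refine Or.inl ⟨huR, hlo, by omega, fun h => ?_⟩
          have : o u = B := by rw [h, f7]
          omega
        · exact Or.inl ⟨huR, by omega, hhi, hne⟩
        · rw [Set.mem_singleton_iff] at hu2
          subst hu2; exact Or.inr (Or.inl rfl)
        · exact Or.inr (Or.inr ⟨he1, he2⟩)
    have d3 : Disjoint ({r2} : Set (Fin n)) Eset := by
      rw [Set.disjoint_left]
      intro x hx hy
      rw [Set.mem_singleton_iff] at hx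
      obtain ⟨_, hy2⟩ := hy
      have : o r2 = B := by rw [← hx, hy2, f7]
      omega
    have d2 : Disjoint (SR3 \ {β}) ({r2} ∪ Eset) := by
      rw [Set.disjoint_left]
      rintro x ⟨⟨hxR, hlo, hhi⟩, hne⟩ hy
      rcases hy with hy | ⟨_, hy2⟩
      · rw [Set.mem_singleton_iff] at hy
        subst hy; omega
      · exact hne hy2
    have d1 : Disjoint SR2 ((SR3 \ {β}) ∪ ({r2} ∪ Eset)) := by
      rw [Set.disjoint_left]
      rintro x ⟨hxR, hlo, hhi⟩ hy
      rcases hy with ⟨⟨_, hlo2, _⟩, _⟩ | hy | ⟨_, hy2⟩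
      · omega
      · rw [Set.mem_singleton_iff] at hy; subst hy; omega
      · subst hy2; rw [f7] at *; omega
    rw [he1, Set.ncard_union_eq d1 (Set.toFinite _) (Set.toFinite _),
        Set.ncard_union_eq d2 (Set.toFinite _) (Set.toFinite _),
        Set.ncard_union_eq d3 (Set.toFinite _) (Set.toFinite _),
        Set.ncard_singleton, hEcard]
  have hTBsplit : TB.ncard = t + (p' + 1) := by
    have he1 : TB = SR4 ∪ ((SR1 \ {α}) ∪ {r1}) := by
      ext u
      constructor
      · intro hu
        rcases hu with ⟨huR, hlo | hhi, hne⟩ | hu2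
        · rcases Nat.eq_zero_or_pos (o u) with h0 | h0
          · exact Or.inr (Or.inr (oinj _ _ (by omega)))
          · exact Or.inr (Or.inl ⟨⟨huR, h0, hlo⟩, hne⟩)
        · exact Or.inl ⟨huR, hhi⟩
        · exact Or.inr (Or.inr (oinj _ _ (by omega)))
      · intro hu
        rcases hu with ⟨huR, hhi⟩ | ⟨⟨huR, hlo, hhi⟩, hne⟩ | hu2
        · refine Or.inl ⟨huR, Or.inr hhi, fun h => ?_⟩
          have : o u = A := by rw [h, f6]
          omega
        · exact Or.inl ⟨huR, Or.inl hhi, hne⟩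
        · rw [Set.mem_singleton_iff] at hu2
          subst hu2; exact Or.inr f5
    have d3 : Disjoint (SR1 \ {α}) ({r1} : Set (Fin n)) := by
      rw [Set.disjoint_left]
      rintro x ⟨⟨hxR, hlo, hhi⟩, hne⟩ hy
      rw [Set.mem_singleton_iff] at hy
      subst hy; omega
    have d1 : Disjoint SR4 ((SR1 \ {α}) ∪ {r1}) := by
      rw [Set.disjoint_left]
      rintro x ⟨hxR, hlo⟩ hy
      rcases hy with ⟨⟨_, hlo2, hhi2⟩, _⟩ | hy
      · omega
      · rw [Set.mem_singleton_iff] at hy; subst hy; omega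
    rw [he1, Set.ncard_union_eq d1 (Set.toFinite _) (Set.toFinite _),
        Set.ncard_union_eq d3 (Set.toFinite _) (Set.toFinite _),
        Set.ncard_singleton]
  have hmem : ∀ v ∈ R, v = r1 ∨ v = r2 ∨ v ∈ SR1 ∨ v ∈ SR2 ∨ v ∈ SR3 ∨ v ∈ SR4 := by
    intro v hv
    have hvlt := hlt v
    rcases Nat.lt_trichotomy (o v) (o b1) with hc | hc | hc
    · rcases Nat.eq_zero_or_pos (o v) with h0 | h0
      · exact Or.inl (oinj v r1 (by omega))
      · exact Or.inr (Or.inr (Or.inl ⟨hv, h0, hc⟩))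
    · exact absurd hv (by have hvb : v = b1 := oinj v b1 (by omega); rw [hvb]; exact hb1)
    · rcases Nat.lt_trichotomy (o v) (o r2) with hc2 | hc2 | hc2
      · exact Or.inr (Or.inr (Or.inr (Or.inl ⟨hv, hc, hc2⟩)))
      · exact Or.inr (Or.inl (oinj v r2 (by omega)))
      · rcases Nat.lt_trichotomy (o v) (o b2) with hc3 | hc3 | hc3
        · exact Or.inr (Or.inr (Or.inr (Or.inr (Or.inl ⟨hv, hc2, hc3⟩))))
        · exact absurd hv (by have hvb : v = b2 := oinj v b2 (by omega); rw [hvb]; exact hb2)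
        · exact Or.inr (Or.inr (Or.inr (Or.inr (Or.inr ⟨hv, hc3⟩))))
  have hReq : R = ({r1} : Set (Fin n)) ∪ (({r2} : Set (Fin n)) ∪ (SR1 ∪ (SR2 ∪ (SR3 ∪ SR4)))) := by
    ext v
    constructor
    · intro hv
      rcases hmem v hv with h | h | h | h | h | h
      · exact Or.inl (by rw [h]; rfl)
      · exact Or.inr (Or.inl (by rw [h]; rfl))
      · exact Or.inr (Or.inr (Or.inl h))
      · exact Or.inr (Or.inr (Or.inr (Or.inl h)))
      · exact Or.inr (Or.inr (Or.inr (Or.inr (Or.inl h))))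
      · exact Or.inr (Or.inr (Or.inr (Or.inr (Or.inr h))))
    · intro hv
      rcases hv with h | h | h | h | h | h
      · rw [Set.mem_singleton_iff] at h; rw [h]; exact hr1
      · rw [Set.mem_singleton_iff] at h; rw [h]; exact hr2
      · exact h.1
      · exact h.1
      · exact h.1
      · exact h.1
  have hRcard : R.ncard = 1 + (1 + (SR1.ncard + (q + (SR3.ncard + t)))) := by
    have dd5 : Disjoint SR3 SR4 := by
      rw [Set.disjoint_left]; rintro x ⟨_, _, h1⟩ ⟨_, h2⟩; omega
    have dd4 : Disjoint SR2 (SR3 ∪ SR4) := by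
      rw [Set.disjoint_left]; rintro x ⟨_, _, h1⟩ hy
      rcases hy with ⟨_, h2, _⟩ | ⟨_, h2⟩ <;> omega
    have dd3 : Disjoint SR1 (SR2 ∪ (SR3 ∪ SR4)) := by
      rw [Set.disjoint_left]; rintro x ⟨_, _, h1⟩ hy
      rcases hy with ⟨_, h2, _⟩ | ⟨_, h2, _⟩ | ⟨_, h2⟩ <;> omega
    have dd2 : Disjoint ({r2} : Set (Fin n)) (SR1 ∪ (SR2 ∪ (SR3 ∪ SR4))) := by
      rw [Set.disjoint_left]; intro x hx hy
      rw [Set.mem_singleton_iff] at hx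
      have hox : o x = o r2 := congrArg o hx
      rcases hy with ⟨_, _, h2⟩ | ⟨_, _, h2⟩ | ⟨_, h2, _⟩ | ⟨_, h2⟩ <;> omega
    have dd1 : Disjoint ({r1} : Set (Fin n)) (({r2} : Set (Fin n)) ∪ (SR1 ∪ (SR2 ∪ (SR3 ∪ SR4)))) := by
      rw [Set.disjoint_left]; intro x hx hy
      rw [Set.mem_singleton_iff] at hx
      have hox : o x = o r1 := congrArg o hx
      rcases hy with hy | ⟨_, h2, _⟩ | ⟨_, h2, _⟩ | ⟨_, h2, _⟩ | ⟨_, h2⟩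
      · rw [Set.mem_singleton_iff] at hy
        have : o x = o r2 := congrArg o hy
        omega
      all_goals omega
    rw [hReq, Set.ncard_union_eq dd1 (Set.toFinite _) (Set.toFinite _),
        Set.ncard_union_eq dd2 (Set.toFinite _) (Set.toFinite _),
        Set.ncard_union_eq dd3 (Set.toFinite _) (Set.toFinite _),
        Set.ncard_union_eq dd4 (Set.toFinite _) (Set.toFinite _),
        Set.ncard_union_eq dd5 (Set.toFinite _) (Set.toFinite _),
        Set.ncard_singleton, Set.ncard_singleton]
  have hp1 : SR1.ncard = p' + (if α ∈ R then 1 else 0) := by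
    by_cases hα : α ∈ R
    · rw [if_pos hα]
      have hmem1 : α ∈ SR1 := ⟨hα, by omega, by omega⟩
      have := Set.ncard_diff_singleton_add_one hmem1 (Set.toFinite _)
      omega
    · rw [if_neg hα]
      have h9 : SR1 \ {α} = SR1 := Set.diff_singleton_eq_self (fun h => hα h.1)
      rw [hp', h9]; omega
  have hs1 : SR3.ncard = s' + ιβ := by
    by_cases hβm : β ∈ R
    · rw [hιβ, if_pos hβm]
      have hmem1 : β ∈ SR3 := ⟨hβm, by omega, by omega⟩
      have := Set.ncard_diff_singleton_add_one hmem1 (Set.toFinite _)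
      omega
    · rw [hιβ, if_neg hβm]
      have h9 : SR3 \ {β} = SR3 := Set.diff_singleton_eq_self (fun h => hβm h.1)
      rw [hs', h9]; omega
  obtain ⟨k, hk⟩ := hR
  have hNv : ∀ v : Fin n, v ≠ α → v ≠ β →
      H.neighborSet v = (if v ∈ TA then ({α} : Set (Fin n)) else ∅) ∪
        (if v ∈ TB then ({β} : Set (Fin n)) else ∅) := by
    intro v hvα hvβ
    ext u
    simp only [SimpleGraph.mem_neighborSet, Set.mem_union]
    rw [hAdj]
    constructor
    · rintro ⟨hne, ⟨h1, h2⟩ | ⟨h1, h2⟩ | ⟨h1, h2⟩ | ⟨h1, h2⟩⟩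
      · exact absurd h1 hvα
      · exact absurd h1 hvβ
      · subst h1; left; rw [if_pos h2]; exact rfl
      · subst h1; right; rw [if_pos h2]; exact rfl
    · intro h
      rcases h with h | h
      · by_cases hm : v ∈ TA
        · rw [if_pos hm, Set.mem_singleton_iff] at h
          subst h
          exact ⟨hvα, Or.inr (Or.inr (Or.inl ⟨rfl, hm⟩))⟩
        · rw [if_neg hm] at h; exact absurd h (Set.notMem_empty _)
      · by_cases hm : v ∈ TB
        · rw [if_pos hm, Set.mem_singleton_iff] at h
          subst h
          exact ⟨hvβ, Or.inr (Or.inr (Or.inr ⟨rfl, hm⟩))⟩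
        · rw [if_neg hm] at h; exact absurd h (Set.notMem_empty _)
  have hNα : H.neighborSet α = TA := by
    ext u
    simp only [SimpleGraph.mem_neighborSet]
    rw [hAdj]
    constructor
    · rintro ⟨hne, ⟨h1, h2⟩ | ⟨h1, h2⟩ | ⟨h1, h2⟩ | ⟨h1, h2⟩⟩
      · exact h2
      · exact absurd h1 hαβ
      · exact absurd h2 hαTA
      · exact absurd h2 hαTB
    · intro hu
      exact ⟨fun hh => hαTA (by rw [hh]; exact hu), Or.inl ⟨rfl, hu⟩⟩
  have hNβ : H.neighborSet β = TB ∪ Fset := by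
    ext u
    simp only [SimpleGraph.mem_neighborSet, Set.mem_union]
    rw [hAdj]
    constructor
    · rintro ⟨hne, ⟨h1, h2⟩ | ⟨h1, h2⟩ | ⟨h1, h2⟩ | ⟨h1, h2⟩⟩
      · exact absurd h1.symm hαβ
      · exact Or.inl h2
      · exact Or.inr ⟨hβTA.1 h2, h1⟩
      · exact absurd h2 hβTB
    · intro h
      rcases h with h | ⟨hε1, rfl⟩
      · exact ⟨fun hh => hβTB (by rw [hh]; exact h), Or.inr (Or.inl ⟨rfl, h⟩)⟩
      · exact ⟨fun hh => hαβ hh.symm, Or.inr (Or.inr (Or.inl ⟨rfl, hβTA.2 hε1⟩))⟩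
  have g3 : ∀ v : Fin n, v ∈ R ↔ Odd ((H.neighborSet v).ncard) := by
    intro v
    rw [Nat.odd_iff]
    by_cases hvα : v = α
    · subst hvα
      rw [hNα, hTAsplit]
      by_cases hβR : β ∈ R
      · rw [if_pos hβR] at hιβ
        by_cases hαR : α ∈ R
        · rw [if_pos hαR] at hp1
          exact iff_of_true hαR (by omega)
        · rw [if_neg hαR] at hp1
          exact iff_of_false hαR (by omega)
      · rw [if_neg hβR] at hιβ
        by_cases hαR : α ∈ R
        · rw [if_pos hαR] at hp1
          exact iff_of_true hαR (by omega)
        · rw [if_neg hαR] at hp1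
          exact iff_of_false hαR (by omega)
    by_cases hvβ : v = β
    · subst hvβ
      rw [hNβ]
      have hd : Disjoint TB Fset := by
        rw [Set.disjoint_left]; rintro x hx ⟨_, rfl⟩; exact hαTB hx
      rw [Set.ncard_union_eq hd (Set.toFinite _) (Set.toFinite _), hTBsplit, hFcard]
      by_cases hβR : β ∈ R
      · rw [if_pos hβR] at hιβ; exact iff_of_true hβR (by omega)
      · rw [if_neg hβR] at hιβ; exact iff_of_false hβR (by omega)
    · rw [hNv v hvα hvβ]
      have hvlt := hlt v
      have hovα : o v ≠ A := fun h => hvα (oinj _ _ (by rw [h, f6]))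
      have hovβ : o v ≠ B := fun h => hvβ (oinj _ _ (by rw [h, f7]))
      rcases Nat.lt_trichotomy (o v) (o b1) with hc | hc | hc
      · have hTAm : v ∉ TA := fun h => by have := hTAlb v h; omega
        rw [if_neg hTAm, Set.empty_union]
        rcases Nat.eq_zero_or_pos (o v) with h0 | h0
        · have hvr1 : v = r1 := oinj _ _ (by omega)
          have hTBm : v ∈ TB := Or.inr h0
          rw [if_pos hTBm, Set.ncard_singleton]
          exact iff_of_true (by rw [hvr1]; exact hr1) (by omega)
        · by_cases hvR : v ∈ R
          · have hTBm : v ∈ TB := Or.inl ⟨hvR, Or.inl hc, hvα⟩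
            rw [if_pos hTBm, Set.ncard_singleton]
            exact iff_of_true hvR (by omega)
          · have hTBm : v ∉ TB := by
              rintro (⟨h1, _, _⟩ | h2)
              · exact hvR h1
              · omega
            rw [if_neg hTBm, Set.ncard_empty]
            exact iff_of_false hvR (by omega)
      · have hvb1 : v = b1 := oinj _ _ (by omega)
        have hTAm : v ∉ TA := fun h => by have := hTAlb v h; omega
        have hTBm : v ∉ TB := by
          rintro (⟨h1, hlo | hhi, _⟩ | h2) <;> omega
        rw [if_neg hTAm, if_neg hTBm, Set.empty_union, Set.ncard_empty]
        exact iff_of_false (by rw [hvb1]; exact hb1) (by omega)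
      · rcases Nat.lt_trichotomy (o v) (o r2) with hd | hd | hd
        · have hTBm : v ∉ TB := by
            rintro (⟨h1, hlo | hhi, _⟩ | h2) <;> omega
          rw [if_neg hTBm, Set.union_empty]
          by_cases hvR : v ∈ R
          · have hTAm : v ∈ TA := Or.inl ⟨hvR, hc, by omega, hvβ⟩
            rw [if_pos hTAm, Set.ncard_singleton]
            exact iff_of_true hvR (by omega)
          · have hTAm : v ∉ TA := by
              rintro (⟨h1, _⟩ | h2 | ⟨_, h3⟩)
              · exact hvR h1
              · omega
              · exact hvβ h3
            rw [if_neg hTAm, Set.ncard_empty]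
            exact iff_of_false hvR (by omega)
        · have hvr2 : v = r2 := oinj _ _ (by omega)
          have hTAm : v ∈ TA := Or.inr (Or.inl hd)
          have hTBm : v ∉ TB := by
            rintro (⟨h1, hlo | hhi, _⟩ | h2) <;> omega
          rw [if_pos hTAm, if_neg hTBm, Set.union_empty, Set.ncard_singleton]
          exact iff_of_true (by rw [hvr2]; exact hr2) (by omega)
        · rcases Nat.lt_trichotomy (o v) (o b2) with he | he | he
          · have hTBm : v ∉ TB := by
              rintro (⟨h1, hlo | hhi, _⟩ | h2) <;> omega
            rw [if_neg hTBm, Set.union_empty]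
            by_cases hvR : v ∈ R
            · have hTAm : v ∈ TA := Or.inl ⟨hvR, by omega, he, hvβ⟩
              rw [if_pos hTAm, Set.ncard_singleton]
              exact iff_of_true hvR (by omega)
            · have hTAm : v ∉ TA := by
                rintro (⟨h1, _⟩ | h2 | ⟨_, h3⟩)
                · exact hvR h1
                · omega
                · exact hvβ h3
              rw [if_neg hTAm, Set.ncard_empty]
              exact iff_of_false hvR (by omega)
          · have hvb2 : v = b2 := oinj _ _ (by omega)
            have hTAm : v ∉ TA := by
              rintro (⟨_, _, h3, _⟩ | h2 | ⟨_, h3⟩)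
              · omega
              · omega
              · exact hvβ h3
            have hTBm : v ∉ TB := by
              rintro (⟨h1, hlo | hhi, _⟩ | h2) <;> omega
            rw [if_neg hTAm, if_neg hTBm, Set.empty_union, Set.ncard_empty]
            exact iff_of_false (by rw [hvb2]; exact hb2) (by omega)
          · have hTAm : v ∉ TA := by
              rintro (⟨_, _, h3, _⟩ | h2 | ⟨_, h3⟩)
              · omega
              · omega
              · exact hvβ h3
            rw [if_neg hTAm, Set.empty_union]
            by_cases hvR : v ∈ R
            · have hTBm : v ∈ TB := Or.inl ⟨hvR, Or.inr he, hvα⟩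
              rw [if_pos hTBm, Set.ncard_singleton]
              exact iff_of_true hvR (by omega)
            · have hTBm : v ∉ TB := by
                rintro (⟨h1, _, _⟩ | h2)
                · exact hvR h1
                · omega
              rw [if_neg hTBm, Set.ncard_empty]
              exact iff_of_false hvR (by omega)
  exact ⟨H, g1, g2, g3⟩

end Stmt10


namespace Stmt10

variable {n : ℕ}
open scoped Fin.NatCast Fin.CommRing

def mirror [NeZero n] (r1 x : Fin n) : Fin n := r1 - (x - r1)

lemma mirror_invol [NeZero n] (r1 x : Fin n) : mirror r1 (mirror r1 x) = x := by
  unfold mirror; ring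

lemma mirror_base [NeZero n] (r1 : Fin n) : mirror r1 r1 = r1 := by
  unfold mirror; simp

lemma mirror_inj [NeZero n] (r1 : Fin n) : Function.Injective (mirror r1) := by
  intro a b h
  have := congrArg (mirror r1) h
  rwa [mirror_invol, mirror_invol] at this

lemma mirror_sub [NeZero n] (r1 x : Fin n) : mirror r1 x - r1 = -(x - r1) := by
  unfold mirror; ring

lemma mirror_off [NeZero n] (r1 x : Fin n) :
    ((x - r1).val = 0 ∧ (mirror r1 x - r1).val = 0) ∨
    (0 < (x - r1).val ∧ (mirror r1 x - r1).val = n - (x - r1).val) := by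
  have hlt : (x - r1).val < n := (x - r1).is_lt
  rw [mirror_sub, Fin.neg_def]
  rcases Nat.eq_zero_or_pos (x - r1).val with h | h
  · left
    refine ⟨h, ?_⟩
    show (n - (x - r1).val) % n = 0
    rw [h]
    simp
  · right
    refine ⟨h, ?_⟩
    show (n - (x - r1).val) % n = n - (x - r1).val
    exact Nat.mod_eq_of_lt (by omega)

lemma cross_mirror [NeZero n] (r1 u v w z : Fin n) (h : Cross n s(u, v) s(w, z)) :
    Cross n s(mirror r1 u, mirror r1 v) s(mirror r1 w, mirror r1 z) := by
  have quad := cross_elim r1 u v w z h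
  have hu := mirror_off r1 u
  have hv := mirror_off r1 v
  have hw := mirror_off r1 w
  have hz := mirror_off r1 z
  have lu : (u - r1).val < n := (u - r1).is_lt
  have lv : (v - r1).val < n := (v - r1).is_lt
  have lw : (w - r1).val < n := (w - r1).is_lt
  have lz : (z - r1).val < n := (z - r1).is_lt
  rcases quad with ⟨c1, c2⟩ | ⟨c1, c2⟩ | ⟨c1, c2⟩ | ⟨c1, c2⟩
  · have hcr : Cross n s(mirror r1 v, mirror r1 u) s(mirror r1 w, mirror r1 z) := by
      refine cross_intro r1 _ _ _ _ ?_ ?_ <;> (simp only [Cyc] at *; omega)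
    rwa [show (s(mirror r1 v, mirror r1 u) : Sym2 (Fin n)) = s(mirror r1 u, mirror r1 v) from
      Sym2.eq_swap] at hcr
  · refine cross_intro r1 _ _ _ _ ?_ ?_ <;> (simp only [Cyc] at *; omega)
  · refine cross_intro r1 _ _ _ _ ?_ ?_ <;> (simp only [Cyc] at *; omega)
  · have hcr : Cross n s(mirror r1 v, mirror r1 u) s(mirror r1 w, mirror r1 z) := by
      refine cross_intro r1 _ _ _ _ ?_ ?_ <;> (simp only [Cyc] at *; omega)
    rwa [show (s(mirror r1 v, mirror r1 u) : Sym2 (Fin n)) = s(mirror r1 u, mirror r1 v) from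
      Sym2.eq_swap] at hcr

end Stmt10


/-- Let `G` be a maximal outerplane graph on `Fin n` with red vertex set
`R` of even cardinality.  If `G` contains two non-parallel red-blue diagonals, then
`G` is augmentable to meet `R`. -/
theorem stmt_10 (n : ℕ) (G : SimpleGraph (Fin n)) (hG : IsMOP n G)
    (R : Set (Fin n)) (hR : Even R.ncard)
    (hnp : HasNonParallelRedBlueDiagonals n G R) :
    Augmentable n G R := by
  obtain ⟨hn3, hbd, hdor, hncross, hcount⟩ := hG
  haveI : NeZero n := ⟨by omega⟩
  obtain ⟨r1, b1, r2, b2, hd1, hdg1, hd2, hdg2, hr1, hr2, hb1, hb2, hord⟩ := hnp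
  have hv1a : (b1 - r1).val ≠ 1 := fun h => hdg1.2 ⟨r1, b1, rfl, h⟩
  have hv1b : (r1 - b1).val ≠ 1 := fun h => hdg1.2 ⟨b1, r1, Sym2.eq_swap, h⟩
  have hv2a : (b2 - r2).val ≠ 1 := fun h => hdg2.2 ⟨r2, b2, rfl, h⟩
  have hv2b : (r2 - b2).val ≠ 1 := fun h => hdg2.2 ⟨b2, r2, Sym2.eq_swap, h⟩
  have lb1 : (b1 - r1).val < n := (b1 - r1).is_lt
  have lr2 : (r2 - r1).val < n := (r2 - r1).is_lt
  have lb2 : (b2 - r1).val < n := (b2 - r1).is_lt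
  rcases hord with ⟨ho1, ho2, ho3⟩ | ⟨ho1, ho2, ho3⟩
  · -- clockwise order r1 b1 r2 b2 : direct application of core
    have hsub : (b2 - r2).val = (b2 - r1).val - (r2 - r1).val := by
      rw [Stmt10.sub_rebase r1 r2 b2, Stmt10.fin_sub_val,
        Stmt10.modsub lb2 lr2, if_pos (by omega)]
    exact Stmt10.core G R r1 b1 r2 b2 hncross hd1 hd2 hr1 hr2 hb1 hb2 hR
      (by omega) ho2 (by omega)
  · -- mirrored order : transport through the reflection x ↦ r1 - (x - r1)
    set ψ : Fin n → Fin n := Stmt10.mirror r1 with hψ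
    have hinv : ∀ x, ψ (ψ x) = x := fun x => Stmt10.mirror_invol r1 x
    have hbase : ψ r1 = r1 := Stmt10.mirror_base r1
    have hinj : Function.Injective ψ := Stmt10.mirror_inj r1
    set G' : SimpleGraph (Fin n) := G.comap ψ with hG'
    set R' : Set (Fin n) := ψ ⁻¹' R with hR'
    -- offsets of mirrored points
    have hob1 := Stmt10.mirror_off r1 b1
    have hor2 := Stmt10.mirror_off r1 r2
    have hob2 := Stmt10.mirror_off r1 b2
    have hrb1 : (r1 - b1).val = n - (b1 - r1).val := by
      rw [show r1 - b1 = -(b1 - r1) by rw [neg_sub], Fin.neg_def]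
      show (n - (b1 - r1).val) % n = n - (b1 - r1).val
      exact Nat.mod_eq_of_lt (by omega)
    have hr2b2 : (r2 - b2).val = (r2 - r1).val - (b2 - r1).val := by
      rw [Stmt10.sub_rebase r1 b2 r2, Stmt10.fin_sub_val,
        Stmt10.modsub lr2 lb2, if_pos (by omega)]
    -- hypotheses of core for the mirrored instance
    have hnc' : ∀ e ∈ G'.edgeSet, ∀ f ∈ G'.edgeSet, ¬ Cross n e f := by
      intro e
      induction e using Sym2.ind with
      | _ u v =>
        intro he f
        induction f using Sym2.ind with
        | _ w z =>
          intro hf hC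
          rw [SimpleGraph.mem_edgeSet] at he hf
          exact hncross _ ((SimpleGraph.mem_edgeSet _).2 he) _ ((SimpleGraph.mem_edgeSet _).2 hf)
            (Stmt10.cross_mirror r1 u v w z hC)
    have hd1' : s(r1, ψ b1) ∈ G'.edgeSet := by
      rw [SimpleGraph.mem_edgeSet]
      show G.Adj (ψ r1) (ψ (ψ b1))
      rw [hbase, hinv]
      exact (SimpleGraph.mem_edgeSet _).1 hd1
    have hd2' : s(ψ r2, ψ b2) ∈ G'.edgeSet := by
      rw [SimpleGraph.mem_edgeSet]
      show G.Adj (ψ (ψ r2)) (ψ (ψ b2))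
      rw [hinv, hinv]
      exact (SimpleGraph.mem_edgeSet _).1 hd2
    have hr1' : r1 ∈ R' := by
      rw [hR', Set.mem_preimage, hbase]; exact hr1
    have hr2' : ψ r2 ∈ R' := by
      rw [hR', Set.mem_preimage, hinv]; exact hr2
    have hb1' : ψ b1 ∉ R' := by
      rw [hR', Set.mem_preimage, hinv]; exact hb1
    have hb2' : ψ b2 ∉ R' := by
      rw [hR', Set.mem_preimage, hinv]; exact hb2
    have hRcard' : Even R'.ncard := by
      have him : R' = ψ '' R := by
        ext x
        rw [hR', Set.mem_preimage]
        constructor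
        · intro h; exact ⟨ψ x, h, hinv x⟩
        · rintro ⟨y, hy, rfl⟩; rwa [hinv]
      rw [him, Set.ncard_image_of_injective _ hinj]
      exact hR
    obtain ⟨H', k1, k2, k3⟩ :=
      Stmt10.core G' R' r1 (ψ b1) (ψ r2) (ψ b2) hnc' hd1' hd2' hr1' hr2' hb1' hb2' hRcard'
        (by rcases hob1 with ⟨h, _⟩ | ⟨_, h⟩ <;> rw [hψ] at * <;> omega)
        (by rcases hob1 with ⟨h, _⟩ | ⟨_, h⟩ <;> rcases hor2 with ⟨h', _⟩ | ⟨_, h'⟩ <;>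
          rw [hψ] at * <;> omega)
        (by rcases hor2 with ⟨h', _⟩ | ⟨_, h'⟩ <;> rcases hob2 with ⟨h'', _⟩ | ⟨_, h''⟩ <;>
          rw [hψ] at * <;> omega)
    refine ⟨H'.comap ψ, ?_, ?_, ?_⟩
    · intro e
      induction e using Sym2.ind with
      | _ u v =>
        intro he heG
        rw [SimpleGraph.mem_edgeSet] at he heG
        have : s(ψ u, ψ v) ∈ H'.edgeSet := (SimpleGraph.mem_edgeSet _).2 he
        refine k1 _ this ?_
        rw [SimpleGraph.mem_edgeSet]
        show G.Adj (ψ (ψ u)) (ψ (ψ v))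
        rw [hinv, hinv]
        exact heG
    · intro e
      induction e using Sym2.ind with
      | _ u v =>
        intro he f
        induction f using Sym2.ind with
        | _ w z =>
          intro hf hC
          rw [SimpleGraph.mem_edgeSet] at he hf
          exact k2 _ ((SimpleGraph.mem_edgeSet _).2 he) _ ((SimpleGraph.mem_edgeSet _).2 hf)
            (Stmt10.cross_mirror r1 u v w z hC)
    · intro v
      have hvR : v ∈ R ↔ ψ v ∈ R' := by
        rw [hR', Set.mem_preimage, hinv]
      have hNS : (H'.comap ψ).neighborSet v = ψ '' (H'.neighborSet (ψ v)) := by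
        ext u
        simp only [SimpleGraph.mem_neighborSet, SimpleGraph.comap_adj, Set.mem_image]
        constructor
        · intro h; exact ⟨ψ u, h, hinv u⟩
        · rintro ⟨y, hy, rfl⟩
          rw [hinv]
          exact hy
      rw [hvR, hNS, Set.ncard_image_of_injective _ hinj]
      exact k3 (ψ v)
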